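/- Let f : [a, b] → ℝ be continuous on [a, b] and specularly differentiable on (a, b). If the specular derivative f^♮(x) > 0 for all x ∈ (a, b), then f is strictly increasing on [a, b]. -/

import Mathlib

open Set

noncomputable def A (α β : ℝ) : ℝ :=
  (α * β - 1 + Real.sqrt ((α ^ 2 + 1) * (β ^ 2 + 1))) / (α + β)

/-- `f` is specularly differentiable at `x`: both one-sided derivatives exist. -/
def SpecularDifferentiableAt (f : ℝ → ℝ) (x : ℝ) : Prop :=
  DifferentiableWithinAt ℝ f (Ici x) x ∧ DifferentiableWithinAt ℝ f (Iic x) x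

/-- The specular derivative of `f` at `x`, in terms of the right-hand derivative
`α = f'₊(x)` and the left-hand derivative `β = f'₋(x)`. -/
noncomputable def specDeriv (f : ℝ → ℝ) (x : ℝ) : ℝ :=
  let α := derivWithin f (Ici x) x
  let β := derivWithin f (Iic x) x
  if α + β = 0 then 0 else A α β

lemma sum_pos_of_A_pos {α β : ℝ} (h0 : α + β ≠ 0) (h : 0 < A α β) : 0 < α + β := by
  have hsq : (α * β - 1) ^ 2 ≤ (α ^ 2 + 1) * (β ^ 2 + 1) := by nlinarith [sq_nonneg (α + β)]
  have h1 : |α * β - 1| ≤ Real.sqrt ((α ^ 2 + 1) * (β ^ 2 + 1)) := by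
    rw [← Real.sqrt_sq_eq_abs]; exact Real.sqrt_le_sqrt hsq
  have hN : 0 ≤ α * β - 1 + Real.sqrt ((α ^ 2 + 1) * (β ^ 2 + 1)) := by
    have := neg_abs_le (α * β - 1); linarith
  rcases lt_trichotomy (α + β) 0 with hlt | heq | hgt
  · exfalso
    have : A α β ≤ 0 := div_nonpos_iff.2 (Or.inl ⟨hN, hlt.le⟩)
    linarith
  · exact absurd heq h0
  · exact hgt

/-- For fixed rationals `q, u, v`, there is at most one point `x ∈ (u,v)` such that all
slopes from `x` to the left are `< q` and all slopes to the right are `> q`. -/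
lemma subsingleton_slopeSet (f : ℝ → ℝ) (q u v : ℚ) :
    Set.Subsingleton {x : ℝ | (u : ℝ) < x ∧ x < (v : ℝ) ∧
      (∀ t, (u : ℝ) < t → t < x → slope f x t < (q : ℝ)) ∧
      (∀ t, x < t → t < (v : ℝ) → (q : ℝ) < slope f x t)} := by
  have key : ∀ x y, x ∈ {x : ℝ | (u : ℝ) < x ∧ x < (v : ℝ) ∧
      (∀ t, (u : ℝ) < t → t < x → slope f x t < (q : ℝ)) ∧
      (∀ t, x < t → t < (v : ℝ) → (q : ℝ) < slope f x t)} →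
      y ∈ {x : ℝ | (u : ℝ) < x ∧ x < (v : ℝ) ∧
      (∀ t, (u : ℝ) < t → t < x → slope f x t < (q : ℝ)) ∧
      (∀ t, x < t → t < (v : ℝ) → (q : ℝ) < slope f x t)} → x < y → False := by
    intro x y hx hy hxy
    have h1 : (q : ℝ) < slope f x y := hx.2.2.2 y hxy hy.2.1
    have h2 : slope f y x < (q : ℝ) := hy.2.2.1 x hx.1 hxy
    rw [slope_comm] at h2
    linarith
  intro x hx y hy
  rcases lt_trichotomy x y with h | h | h
  · exact absurd (key x y hx hy h) (by simp)
  · exact h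
  · exact absurd (key y x hy hx h) (by simp)

/-- The set of points where the right-hand derivative strictly exceeds the left-hand
derivative is countable. -/
lemma countable_right_gt_left (f : ℝ → ℝ) :
    Set.Countable {x : ℝ | DifferentiableWithinAt ℝ f (Ici x) x ∧
      DifferentiableWithinAt ℝ f (Iic x) x ∧
      derivWithin f (Iic x) x < derivWithin f (Ici x) x} := by
  apply Set.Countable.mono (s₁ := _) ?_
    (Set.countable_iUnion fun q : ℚ => Set.countable_iUnion fun u : ℚ =>
      Set.countable_iUnion fun v : ℚ => (subsingleton_slopeSet f q u v).countable)
  intro x hx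
  obtain ⟨hR, hL, hlt⟩ := hx
  set α := derivWithin f (Ici x) x with hα
  set β := derivWithin f (Iic x) x with hβ
  obtain ⟨q, hq1, hq2⟩ := exists_rat_btwn hlt
  have hRt : Filter.Tendsto (slope f x) (nhdsWithin x (Ioi x)) (nhds α) := by
    have := hasDerivWithinAt_iff_tendsto_slope.1 hR.hasDerivWithinAt
    rwa [Ici_sdiff_left] at this
  have hLt : Filter.Tendsto (slope f x) (nhdsWithin x (Iio x)) (nhds β) := by
    have := hasDerivWithinAt_iff_tendsto_slope.1 hL.hasDerivWithinAt
    rwa [Iic_diff_right] at this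
  have hevR : ∀ᶠ t in nhdsWithin x (Ioi x), (q : ℝ) < slope f x t :=
    hRt.eventually (eventually_gt_nhds hq2)
  have hevL : ∀ᶠ t in nhdsWithin x (Iio x), slope f x t < (q : ℝ) :=
    hLt.eventually (eventually_lt_nhds hq1)
  obtain ⟨v₀, hv₀, hsubR⟩ := mem_nhdsGT_iff_exists_Ioo_subset.1 hevR
  obtain ⟨u₀, hu₀, hsubL⟩ := mem_nhdsLT_iff_exists_Ioo_subset.1 hevL
  obtain ⟨v, hv1, hv2⟩ := exists_rat_btwn (mem_Ioi.1 hv₀)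
  obtain ⟨u, hu1, hu2⟩ := exists_rat_btwn (mem_Iio.1 hu₀)
  refine Set.mem_iUnion.2 ⟨q, Set.mem_iUnion.2 ⟨u, Set.mem_iUnion.2 ⟨v, ?_⟩⟩⟩
  refine ⟨hu2, hv1, fun t ht1 ht2 => ?_, fun t ht1 ht2 => ?_⟩
  · exact hsubL ⟨lt_of_le_of_lt hu1.le ht1, ht2⟩
  · exact hsubR ⟨ht1, lt_of_lt_of_le ht2 hv2.le⟩

/-- The set of points where the two one-sided derivatives exist but differ is countable. -/
lemma countable_ne_onesided (f : ℝ → ℝ) :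
    Set.Countable {x : ℝ | DifferentiableWithinAt ℝ f (Ici x) x ∧
      DifferentiableWithinAt ℝ f (Iic x) x ∧
      derivWithin f (Ici x) x ≠ derivWithin f (Iic x) x} := by
  have h1 := countable_right_gt_left f
  have h2 := countable_right_gt_left (fun x => -f x)
  apply Set.Countable.mono ?_ (h1.union h2)
  intro x hx
  obtain ⟨hR, hL, hne⟩ := hx
  rcases hne.lt_or_gt with h | h
  · right
    have e1 : derivWithin (fun x => -f x) (Ici x) x = -derivWithin f (Ici x) x :=
      derivWithin.neg
    have e2 : derivWithin (fun x => -f x) (Iic x) x = -derivWithin f (Iic x) x :=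
      derivWithin.neg
    exact ⟨hR.neg, hL.neg, by rw [e1, e2]; linarith⟩
  · left
    exact ⟨hR, hL, h⟩

theorem strictMonoOn_of_specDeriv_pos (f : ℝ → ℝ) (a b : ℝ) (hab : a < b)
    (hcont : ContinuousOn f (Icc a b))
    (hdiff : ∀ x ∈ Ioo a b, SpecularDifferentiableAt f x)
    (hpos : ∀ x ∈ Ioo a b, 0 < specDeriv f x) :
    StrictMonoOn f (Icc a b) := by
  -- the sum of the one-sided derivatives is positive on (a,b)
  have hsum : ∀ x ∈ Ioo a b, 0 < derivWithin f (Ici x) x + derivWithin f (Iic x) x := by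
    intro x hx
    have h := hpos x hx
    simp only [specDeriv] at h
    by_cases h0 : derivWithin f (Ici x) x + derivWithin f (Iic x) x = 0
    · rw [if_pos h0] at h; exact absurd h (lt_irrefl 0)
    · rw [if_neg h0] at h; exact sum_pos_of_A_pos h0 h
  -- the countable exceptional set
  set D : Set ℝ := {x : ℝ | DifferentiableWithinAt ℝ f (Ici x) x ∧
      DifferentiableWithinAt ℝ f (Iic x) x ∧
      derivWithin f (Ici x) x ≠ derivWithin f (Iic x) x} with hD
  have hDc : D.Countable := countable_ne_onesided f
  -- off the exceptional set, f has a positive genuine derivative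
  have hgood : ∀ x ∈ Ioo a b, x ∉ D →
      HasDerivAt f (derivWithin f (Ici x) x) x ∧ 0 < derivWithin f (Ici x) x := by
    intro x hx hxD
    obtain ⟨hR, hL⟩ := hdiff x hx
    have heq : derivWithin f (Ici x) x = derivWithin f (Iic x) x := by
      by_contra hne
      exact hxD ⟨hR, hL, hne⟩
    have hpos' : 0 < derivWithin f (Ici x) x := by
      have := hsum x hx; rw [← heq] at this; linarith
    have hhR : HasDerivWithinAt f (derivWithin f (Ici x) x) (Ici x) x := hR.hasDerivWithinAt
    have hhL : HasDerivWithinAt f (derivWithin f (Ici x) x) (Iic x) x := by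
      rw [heq]; exact hL.hasDerivWithinAt
    have := hhL.union hhR
    rw [Iic_union_Ici] at this
    exact ⟨hasDerivWithinAt_univ.1 this, hpos'⟩
  -- φ : vanishes off D, and is ≤ the right derivative everywhere on (a,b)
  set φ : ℝ → ℝ := fun t => if t ∈ Ioo a b then min (derivWithin f (Ici t) t) 0 else 0 with hφ
  have hφD : {t : ℝ | φ t ≠ 0} ⊆ D := by
    intro t ht
    simp only [hφ, Set.mem_setOf_eq] at ht
    by_cases htI : t ∈ Ioo a b
    · rw [if_pos htI] at ht
      have hneg : derivWithin f (Ici t) t < 0 := by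
        by_contra hge
        push_neg at hge
        exact ht (min_eq_right hge)
      by_contra htD
      exact absurd (hgood t htI htD).2 (by linarith)
    · rw [if_neg htI] at ht; exact absurd rfl ht
  have hφ0 : φ =ᵐ[MeasureTheory.volume] (fun _ => (0 : ℝ)) := by
    refine MeasureTheory.ae_iff.2 ?_
    exact MeasureTheory.measure_mono_null hφD (hDc.measure_zero _)
  -- monotonicity via FTC with right derivatives
  have hmono : ∀ x ∈ Icc a b, ∀ y ∈ Icc a b, x ≤ y → f x ≤ f y := by
    intro x hx y hy hxy
    have hccsub : Icc x y ⊆ Icc a b := Icc_subset_Icc hx.1 hy.2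
    have hoosub : Ioo x y ⊆ Ioo a b := Ioo_subset_Ioo hx.1 hy.2
    have hint : MeasureTheory.IntegrableOn φ (Icc x y) := by
      refine (MeasureTheory.integrable_zero _ _ _).congr ?_
      exact MeasureTheory.ae_restrict_of_ae hφ0.symm
    have hderiv : ∀ t ∈ Ioo x y,
        HasDerivWithinAt f (derivWithin f (Ici t) t) (Ioi t) t := by
      intro t ht
      exact ((hdiff t (hoosub ht)).1.hasDerivWithinAt).mono Ioi_subset_Ici_self
    have hle : ∀ t ∈ Ioo x y, φ t ≤ derivWithin f (Ici t) t := by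
      intro t ht
      simp only [hφ, if_pos (hoosub ht)]
      exact min_le_left _ _
    have := intervalIntegral.integral_le_sub_of_hasDeriv_right_of_le hxy
      (hcont.mono hccsub) hderiv hint hle
    have hzero : (∫ t in x..y, φ t) = 0 := by
      rw [intervalIntegral.integral_congr_ae
        (g := fun _ => (0 : ℝ)) (by filter_upwards [hφ0] with t ht _ using ht)]
      simp
    linarith [hzero ▸ this]
  -- strictness
  intro x hx y hy hxy
  rcases lt_or_ge (f x) (f y) with h | h
  · exact h
  have hfeq : ∀ t ∈ Icc x y, f t = f x := by
    intro t ht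
    have h1 : f x ≤ f t := hmono x hx t ⟨hx.1.trans ht.1, ht.2.trans hy.2⟩ ht.1
    have h2 : f t ≤ f y := hmono t ⟨hx.1.trans ht.1, ht.2.trans hy.2⟩ y hy ht.2
    linarith
  -- pick a point of (x,y) outside D
  have hdense : Dense Dᶜ := hDc.dense_compl ℝ
  obtain ⟨c, hcD, hc⟩ := hdense.exists_mem_open isOpen_Ioo (nonempty_Ioo.2 hxy)
  have hcab : c ∈ Ioo a b := Ioo_subset_Ioo hx.1 hy.2 hc
  obtain ⟨hder, hder_pos⟩ := hgood c hcab hcD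
  -- f is locally constant at c, so its derivative there is 0 — contradiction
  have hconst : f =ᶠ[nhds c] fun _ => f x := by
    filter_upwards [Ioo_mem_nhds hc.1 hc.2] with t ht
    exact hfeq t ⟨ht.1.le, ht.2.le⟩
  have h0 : HasDerivAt f 0 c := by
    have : HasDerivAt (fun _ : ℝ => f x) 0 c := hasDerivAt_const c (f x)
    exact this.congr_of_eventuallyEq hconst
  have := hder.unique h0
  linarith
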